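/- Let V be a real inner product space and let α₁, α₂, α₃, β₁, β̄₂, β̄₃ ∈ V satisfy: ⟪τ,τ⟫ = 2 for each of these vectors; ⟪α₂,β₁⟫ = −1, ⟪β₁,α₃⟫ = −1, ⟪α₃,β̄₂⟫ = −1, ⟪α₂,β̄₂⟫ = 0, ⟪α₂,α₃⟫ = 0, ⟪β₁,β̄₂⟫ = 0; ⟪α₁,β₁⟫ = −1, ⟪α₁,β̄₂⟫ = 1, ⟪α₁,α₂⟫ = ⟪α₁,α₃⟫ = 0; ⟪β̄₃,α₂⟫ = 1, ⟪β̄₃,α₃⟫ = −1, ⟪β̄₃,β₁⟫ = 0, ⟪β̄₃,β̄₂⟫ = 0 (the Gram relations of the Carter diagram E₆(a₂)). Set β₂ := −(α₃ + β₁ + α₂ + β̄₂). Then ⟪β₂,β₂⟫ = 2, ⟪β₂,α₂⟫ = −1, and β₂ is orthogonal to each of α₁, α₃, β₁, β̄₃ (the Gram relations of the Carter diagram E₆(a₁)). -/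
import Mathlib

open scoped RealInnerProductSpace


theorem stmt3 {V : Type*} [NormedAddCommGroup V] [InnerProductSpace ℝ V]
    (α₁ α₂ α₃ β₁ βb₂ βb₃ : V)
    (h0 : ⟪α₁, α₁⟫ = 2)
    (h1 : ⟪α₂, α₂⟫ = 2)
    (h2 : ⟪α₃, α₃⟫ = 2)
    (h3 : ⟪β₁, β₁⟫ = 2)
    (h4 : ⟪βb₂, βb₂⟫ = 2)
    (h5 : ⟪βb₃, βb₃⟫ = 2)
    (h6 : ⟪α₂, β₁⟫ = -1)
    (h7 : ⟪β₁, α₃⟫ = -1)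
    (h8 : ⟪α₃, βb₂⟫ = -1)
    (h9 : ⟪α₂, βb₂⟫ = 0)
    (h10 : ⟪α₂, α₃⟫ = 0)
    (h11 : ⟪β₁, βb₂⟫ = 0)
    (h12 : ⟪α₁, β₁⟫ = -1)
    (h13 : ⟪α₁, βb₂⟫ = 1)
    (h14 : ⟪α₁, α₂⟫ = 0)
    (h15 : ⟪α₁, α₃⟫ = 0)
    (h16 : ⟪βb₃, α₂⟫ = 1)
    (h17 : ⟪βb₃, α₃⟫ = -1)
    (h18 : ⟪βb₃, β₁⟫ = 0)
    (h19 : ⟪βb₃, βb₂⟫ = 0)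
    (β₂ : V) (hdef : β₂ = -(α₃ + β₁ + α₂ + βb₂)) :
    ⟪β₂, β₂⟫ = 2 ∧
    ⟪β₂, α₂⟫ = -1 ∧
    ⟪β₂, α₁⟫ = 0 ∧
    ⟪β₂, α₃⟫ = 0 ∧
    ⟪β₂, β₁⟫ = 0 ∧
    ⟪β₂, βb₃⟫ = 0 := by
  have c1 := real_inner_comm α₂ β₁
  have c2 := real_inner_comm β₁ α₃
  have c3 := real_inner_comm α₃ βb₂
  have c4 := real_inner_comm α₂ βb₂
  have c5 := real_inner_comm α₂ α₃
  have c6 := real_inner_comm β₁ βb₂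
  have c7 := real_inner_comm α₁ β₁
  have c8 := real_inner_comm α₁ βb₂
  have c9 := real_inner_comm α₁ α₂
  have c10 := real_inner_comm α₁ α₃
  have c11 := real_inner_comm βb₃ α₂
  have c12 := real_inner_comm βb₃ α₃
  have c13 := real_inner_comm βb₃ β₁
  have c14 := real_inner_comm βb₃ βb₂
  subst hdef
  simp only [inner_add_left, inner_add_right, inner_neg_left, inner_neg_right] at *
  refine ⟨by linarith, by linarith, by linarith, by linarith, by linarith, by linarith⟩
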